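/- Define the vector field X₀ on ℝ⁴ by X₀(θ,x₁,x₂,x₃) = (x₁²+x₂²−2x₃²)·e₀ − 3x₂x₃·e₁ + 3x₁x₃·e₂. Then for every point p = (θ,x₁,x₂,x₃), λ(p)(X₀(p)) = −½(x₁²+x₂²−2x₃²)² − 3x₃²(x₁²+x₂²) = −(½(x₁²+x₂²)² + (x₁²+x₂²)x₃² + 2x₃⁴), and this quantity is strictly negative unless x₁ = x₂ = x₃ = 0. Consequently, at every point with (x₁,x₂,x₃) ≠ 0 the vector field X := X₀ / λ(X₀) is well defined and satisfies λ(X) = 1. -/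
import Mathlib


noncomputable section

/-- The 1-form λ = −½(x₁²+x₂²−2x₃²)dθ + x₂x₃dx₁ − x₁x₃dx₂ on ℝ⁴. -/
def lamA (p v : Fin 4 → ℝ) : ℝ :=
  -(1 / 2) * (p 1 ^ 2 + p 2 ^ 2 - 2 * p 3 ^ 2) * v 0 + p 2 * p 3 * v 1 - p 1 * p 3 * v 2

/-- The vector field X₀ = (x₁²+x₂²−2x₃²)e₀ − 3x₂x₃e₁ + 3x₁x₃e₂. -/
def X0 (p : Fin 4 → ℝ) : Fin 4 → ℝ :=
  ![p 1 ^ 2 + p 2 ^ 2 - 2 * p 3 ^ 2, -3 * p 2 * p 3, 3 * p 1 * p 3, 0]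

/-- λ(X₀) = −½(x₁²+x₂²−2x₃²)² − 3x₃²(x₁²+x₂²) = −(½(x₁²+x₂²)² + (x₁²+x₂²)x₃² + 2x₃⁴),
which is strictly negative unless x₁=x₂=x₃=0; hence off the singular circle the
normalized vector field X = X₀/λ(X₀) satisfies λ(X) = 1. -/
theorem lambda_X0 (p : Fin 4 → ℝ) :
    lamA p (X0 p)
      = -(1 / 2) * (p 1 ^ 2 + p 2 ^ 2 - 2 * p 3 ^ 2) ^ 2
        - 3 * p 3 ^ 2 * (p 1 ^ 2 + p 2 ^ 2) ∧
    lamA p (X0 p)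
      = -((1 / 2) * (p 1 ^ 2 + p 2 ^ 2) ^ 2 + (p 1 ^ 2 + p 2 ^ 2) * p 3 ^ 2
          + 2 * p 3 ^ 4) ∧
    (¬(p 1 = 0 ∧ p 2 = 0 ∧ p 3 = 0) →
      lamA p (X0 p) < 0 ∧ lamA p ((lamA p (X0 p))⁻¹ • X0 p) = 1) := by
  have h1 : lamA p (X0 p)
      = -(1 / 2) * (p 1 ^ 2 + p 2 ^ 2 - 2 * p 3 ^ 2) ^ 2
        - 3 * p 3 ^ 2 * (p 1 ^ 2 + p 2 ^ 2) := by
    simp [lamA, X0]; ring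
  have h2 : lamA p (X0 p)
      = -((1 / 2) * (p 1 ^ 2 + p 2 ^ 2) ^ 2 + (p 1 ^ 2 + p 2 ^ 2) * p 3 ^ 2
          + 2 * p 3 ^ 4) := by rw [h1]; ring
  refine ⟨h1, h2, fun h => ?_⟩
  have hneg : lamA p (X0 p) < 0 := by
    rw [h2]
    have h1' : 0 ≤ p 1 ^ 2 := sq_nonneg _
    have h2' : 0 ≤ p 2 ^ 2 := sq_nonneg _
    have h3' : 0 ≤ p 3 ^ 2 := sq_nonneg _
    rcases not_and_or.1 h with h' | h'
    · have : 0 < p 1 ^ 2 := by positivity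
      nlinarith [sq_nonneg (p 3 ^ 2)]
    rcases not_and_or.1 h' with h'' | h''
    · have : 0 < p 2 ^ 2 := by positivity
      nlinarith [sq_nonneg (p 3 ^ 2)]
    · have : 0 < p 3 ^ 2 := by positivity
      nlinarith [sq_nonneg (p 3 ^ 2)]
  refine ⟨hneg, ?_⟩
  have hne : lamA p (X0 p) ≠ 0 := ne_of_lt hneg
  have hlin : ∀ (c : ℝ) (v : Fin 4 → ℝ), lamA p (c • v) = c * lamA p v := by
    intro c v; simp [lamA]; ring
  rw [hlin, inv_mul_cancel₀ hne]
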